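/- For every g ∈ G and every C^∞ function f : ℂ → ℂ, one has L(T_g f) = T_g(L f), where (T_g f)(z) = J(g,z)·f(g·z); that is, the magnetic Schrödinger operator L commutes with the projective translations T_g. -/

import Mathlib

noncomputable section

open Complex

/-- The group `G = 𝕋 ⋉ ℂ`, with elements `[a,b]`, acting on `ℂ` by `z ↦ a z + b`. -/
@[ext]
structure GT : Type where
  a : Circle
  b : ℂ

namespace GT

instance : Group GT where
  mul g h := ⟨g.a * h.a, (g.a : ℂ) * h.b + g.b⟩
  one := ⟨1, 0⟩
  inv g := ⟨g.a⁻¹, -((g.a⁻¹ : ℂ) * g.b)⟩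
  mul_assoc g h k := by
    refine GT.ext (mul_assoc _ _ _) ?_
    show ((g.a * h.a : Circle) : ℂ) * k.b + ((g.a : ℂ) * h.b + g.b)
        = (g.a : ℂ) * ((h.a : ℂ) * k.b + h.b) + g.b
    push_cast; ring
  one_mul g := by
    refine GT.ext (one_mul _) ?_
    show ((1 : Circle) : ℂ) * g.b + 0 = g.b
    simp
  mul_one g := by
    refine GT.ext (mul_one _) ?_
    show (g.a : ℂ) * 0 + g.b = g.b
    simp
  inv_mul_cancel g := by
    refine GT.ext (inv_mul_cancel _) ?_
    show ((g.a⁻¹ : Circle) : ℂ) * g.b + -(((g.a : ℂ))⁻¹ * g.b) = 0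
    push_cast; ring

/-- The action of `G` on `ℂ` : `[a,b]·z = a z + b`. -/
def act (g : GT) (z : ℂ) : ℂ := (g.a : ℂ) * z + g.b

end GT

/-- The Hermitian product `⟨z,w⟩ = z·conj w`. -/
def herm (z w : ℂ) : ℂ := z * (starRingEnd ℂ) w

/-- The automorphic factor `j^α(g,z) = exp(2 i α Im⟨z, g⁻¹·0⟩)`. -/
def jfac (α : ℝ) (g : GT) (z : ℂ) : ℂ :=
  Complex.exp (2 * Complex.I * (α : ℂ) * ((herm z (GT.act g⁻¹ 0)).im : ℂ))

/-- The Wirtinger derivative `∂f/∂z = (1/2)(∂f/∂x − i ∂f/∂y)`. -/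
def wderiv (f : ℂ → ℂ) (z : ℂ) : ℂ :=
  (1 / 2 : ℂ) * (fderiv ℝ f z 1 - Complex.I * fderiv ℝ f z Complex.I)

/-- The anti-Wirtinger derivative `∂f/∂z̄ = (1/2)(∂f/∂x + i ∂f/∂y)`. -/
def wderivBar (f : ℂ → ℂ) (z : ℂ) : ℂ :=
  (1 / 2 : ℂ) * (fderiv ℝ f z 1 + Complex.I * fderiv ℝ f z Complex.I)

/-- The Euclidean Laplacian `Δ = 4 ∂²/∂z∂z̄`. -/
def lap (f : ℂ → ℂ) (z : ℂ) : ℂ := 4 * wderiv (fun w => wderivBar f w) z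

/-- `S(z) = ν z + μ (τ(z)·∂τ̄/∂z̄(z) − τ̄(z)·∂τ/∂z̄(z))`. -/
def Sfun (ν μ : ℝ) (τ : ℂ → ℂ) (z : ℂ) : ℂ :=
  (ν : ℂ) * z + (μ : ℂ) *
    (τ z * wderivBar (fun w => (starRingEnd ℂ) (τ w)) z - (starRingEnd ℂ) (τ z) * wderivBar τ z)

/-- `B(z) = ν + μ(|∂τ/∂z(z)|² − |∂τ/∂z̄(z)|²)`. -/
def Bfun (ν μ : ℝ) (τ : ℂ → ℂ) (z : ℂ) : ℝ :=
  ν + μ * (‖wderiv τ z‖ ^ 2 - ‖wderivBar τ z‖ ^ 2)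

/-- The magnetic Schrödinger operator `L`. -/
def Lop (ν μ : ℝ) (τ : ℂ → ℂ) (f : ℂ → ℂ) (z : ℂ) : ℂ :=
  - wderiv (fun w => wderivBar f w) z
    - (Sfun ν μ τ z * wderiv f z - (starRingEnd ℂ) (Sfun ν μ τ z) * wderivBar f z)
    + ((‖Sfun ν μ τ z‖ : ℂ)) ^ 2 * f z
    - ((μ : ℂ) / 4) *
        (τ z * lap (fun w => (starRingEnd ℂ) (τ w)) z - (starRingEnd ℂ) (τ z) * lap τ z) * f z

/-- The annihilation operator `A f = ∂f/∂z̄ + S f`. -/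
def Aop (ν μ : ℝ) (τ : ℂ → ℂ) (f : ℂ → ℂ) (z : ℂ) : ℂ :=
  wderivBar f z + Sfun ν μ τ z * f z

/-- The creation operator `Ã f = −∂f/∂z + conj(S) f`. -/
def Atop (ν μ : ℝ) (τ : ℂ → ℂ) (f : ℂ → ℂ) (z : ℂ) : ℂ :=
  - wderiv f z + (starRingEnd ℂ) (Sfun ν μ τ z) * f z

/-- `J(g,z) = j^ν(g,z)·j^μ(ρ(g),τ(z))`. -/
def Jfun (ν μ : ℝ) (ρ : GT → GT) (τ : ℂ → ℂ) (g : GT) (z : ℂ) : ℂ :=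
  jfac ν g z * jfac μ (ρ g) (τ z)

/-- `φ_ρ(g,g') = Im(ν⟨g⁻¹·0,g'·0⟩ + μ⟨ρ(g⁻¹)·0, ρ(g')·0⟩)`. -/
def phiRho (ν μ : ℝ) (ρ : GT → GT) (g g' : GT) : ℝ :=
  ((ν : ℂ) * herm (GT.act g⁻¹ 0) (GT.act g' 0)
    + (μ : ℂ) * herm (GT.act (ρ g⁻¹) 0) (GT.act (ρ g') 0)).im

/-- Membership in the lattice `Γ = ℤω₁ + ℤω₂`. -/
def inLattice (ω₁ ω₂ : ℂ) (γ : ℂ) : Prop := ∃ m n : ℤ, γ = (m : ℂ) * ω₁ + (n : ℂ) * ω₂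

/-- Mixed `Γ`-automorphic form of type `(ν,μ)` w.r.t. the pair `(ρ,τ)`. -/
def MixedForm (ν μ : ℝ) (ρ : GT → GT) (τ : ℂ → ℂ) (ω₁ ω₂ : ℂ) (F : ℂ → ℂ) : Prop :=
  ContDiff ℝ (⊤ : ℕ∞) F ∧ ∀ γ : ℂ, inLattice ω₁ ω₂ γ → ∀ z : ℂ,
    F (z + γ) = jfac (-ν) ⟨(1 : Circle), γ⟩ z * jfac (-μ) (ρ ⟨(1 : Circle), γ⟩) (τ z) * F z

/-- The Laguerre polynomial `L_k`. -/
def laguerre (k : ℕ) (x : ℝ) : ℝ :=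
  ∑ j ∈ Finset.range (k + 1), (-1) ^ j * (k.choose j : ℝ) * x ^ j / (Nat.factorial j : ℝ)


/-- The multiplier `χ_τ(γ) = exp(iφ(γ) − 2iμ Im⟨τ(0), ρ([1,γ])⁻¹·0⟩)`. -/
def chiTau (μ : ℝ) (ρ : GT → GT) (τ : ℂ → ℂ) (φ : ℂ → ℝ) (γ : ℂ) : ℂ :=
  Complex.exp (Complex.I * (φ γ : ℂ)
    - 2 * Complex.I * (μ : ℂ) * ((herm (τ 0) (GT.act (ρ ⟨1, γ⟩)⁻¹ 0)).im : ℂ))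

/-- The eigenprojector kernel `K_k`. -/
def Kker (B : ℝ) (φ : ℂ → ℝ) (k : ℕ) (z w : ℂ) : ℂ :=
  ((2 * B / Real.pi : ℝ) : ℂ) * Complex.exp (-Complex.I * ((φ z - φ w : ℝ) : ℂ)) *
    Complex.exp (2 * Complex.I * (B : ℂ) * ((herm z w).im : ℂ)) *
    Complex.exp (-((B * ‖z - w‖ ^ 2 : ℝ) : ℂ)) *
    ((laguerre k (2 * B * ‖z - w‖ ^ 2) : ℝ) : ℂ)

/-- The kernel `K^σ_ξ;k`. -/
def Kxi (σ : ℝ) (ξ : ℂ) (k : ℕ) (z w : ℂ) : ℂ :=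
  ((2 * σ / Real.pi : ℝ) : ℂ) * Complex.exp (2 * Complex.I * ((herm (z - w) ξ).im : ℂ)) *
    Complex.exp (2 * Complex.I * (σ : ℂ) * ((herm z w).im : ℂ)) *
    Complex.exp (-((σ * ‖z - w‖ ^ 2 : ℝ) : ℂ)) *
    ((laguerre k (2 * σ * ‖z - w‖ ^ 2) : ℝ) : ℂ)

/-- `m`-fold iterate of the creation operator `Ã`. -/
def AtopIter (ν μ : ℝ) (τ : ℂ → ℂ) (m : ℕ) (f : ℂ → ℂ) : ℂ → ℂ :=
  (fun u z => Atop ν μ τ u z)^[m] f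

section Wirt

open Complex

lemma clm_apply_eq (L : ℂ →L[ℝ] ℂ) (v : ℂ) :
    L v = (v.re : ℂ) * L 1 + (v.im : ℂ) * L I := by
  conv_lhs => rw [show v = v.re • (1 : ℂ) + v.im • I by
    rw [Complex.real_smul, Complex.real_smul, mul_one, Complex.re_add_im]]
  rw [map_add, map_smul, map_smul, Complex.real_smul, Complex.real_smul]

lemma wderiv_const (c z : ℂ) : wderiv (fun _ => c) z = 0 := by
  simp [wderiv]

lemma wderivBar_const (c z : ℂ) : wderivBar (fun _ => c) z = 0 := by
  simp [wderivBar]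

lemma wderiv_add {u v : ℂ → ℂ} {z : ℂ} (hu : DifferentiableAt ℝ u z)
    (hv : DifferentiableAt ℝ v z) :
    wderiv (fun w => u w + v w) z = wderiv u z + wderiv v z := by
  simp only [wderiv, fderiv_fun_add hu hv, ContinuousLinearMap.add_apply]; ring

lemma wderivBar_add {u v : ℂ → ℂ} {z : ℂ} (hu : DifferentiableAt ℝ u z)
    (hv : DifferentiableAt ℝ v z) :
    wderivBar (fun w => u w + v w) z = wderivBar u z + wderivBar v z := by
  simp only [wderivBar, fderiv_fun_add hu hv, ContinuousLinearMap.add_apply]; ring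

lemma wderiv_sub {u v : ℂ → ℂ} {z : ℂ} (hu : DifferentiableAt ℝ u z)
    (hv : DifferentiableAt ℝ v z) :
    wderiv (fun w => u w - v w) z = wderiv u z - wderiv v z := by
  simp only [wderiv, fderiv_fun_sub hu hv, ContinuousLinearMap.sub_apply]; ring

lemma wderivBar_sub {u v : ℂ → ℂ} {z : ℂ} (hu : DifferentiableAt ℝ u z)
    (hv : DifferentiableAt ℝ v z) :
    wderivBar (fun w => u w - v w) z = wderivBar u z - wderivBar v z := by
  simp only [wderivBar, fderiv_fun_sub hu hv, ContinuousLinearMap.sub_apply]; ring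

lemma wderiv_mul {u v : ℂ → ℂ} {z : ℂ} (hu : DifferentiableAt ℝ u z)
    (hv : DifferentiableAt ℝ v z) :
    wderiv (fun w => u w * v w) z = wderiv u z * v z + u z * wderiv v z := by
  simp only [wderiv, fderiv_fun_mul hu hv, ContinuousLinearMap.add_apply,
    ContinuousLinearMap.smul_apply, smul_eq_mul]
  ring

lemma wderivBar_mul {u v : ℂ → ℂ} {z : ℂ} (hu : DifferentiableAt ℝ u z)
    (hv : DifferentiableAt ℝ v z) :
    wderivBar (fun w => u w * v w) z = wderivBar u z * v z + u z * wderivBar v z := by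
  simp only [wderivBar, fderiv_fun_mul hu hv, ContinuousLinearMap.add_apply,
    ContinuousLinearMap.smul_apply, smul_eq_mul]
  ring

lemma wderiv_const_mul {u : ℂ → ℂ} {z : ℂ} (c : ℂ) (hu : DifferentiableAt ℝ u z) :
    wderiv (fun w => c * u w) z = c * wderiv u z := by
  simp only [wderiv, fderiv_const_mul hu c, ContinuousLinearMap.smul_apply, smul_eq_mul]
  ring

lemma wderivBar_const_mul {u : ℂ → ℂ} {z : ℂ} (c : ℂ) (hu : DifferentiableAt ℝ u z) :
    wderivBar (fun w => c * u w) z = c * wderivBar u z := by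
  simp only [wderivBar, fderiv_const_mul hu c, ContinuousLinearMap.smul_apply, smul_eq_mul]
  ring

lemma wderiv_id (z : ℂ) : wderiv (fun w => w) z = 1 := by
  simp only [wderiv, fderiv_id', ContinuousLinearMap.coe_id', id_eq]
  rw [Complex.I_mul_I]; ring

lemma wderivBar_id (z : ℂ) : wderivBar (fun w => w) z = 0 := by
  simp only [wderivBar, fderiv_id', ContinuousLinearMap.coe_id', id_eq]
  rw [Complex.I_mul_I]; ring

lemma differentiable_conj : Differentiable ℝ (fun w : ℂ => (starRingEnd ℂ) w) := by
  have := Complex.conjCLE.toContinuousLinearMap.differentiable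
  exact this

lemma fderiv_conj_comp {u : ℂ → ℂ} {z : ℂ} (hu : DifferentiableAt ℝ u z) :
    fderiv ℝ (fun w => (starRingEnd ℂ) (u w)) z
      = (Complex.conjCLE.toContinuousLinearMap).comp (fderiv ℝ u z) := by
  have h : (fun w => (starRingEnd ℂ) (u w)) = (fun w : ℂ => (starRingEnd ℂ) w) ∘ u := rfl
  rw [h, fderiv_comp z (_root_.differentiable_conj (u z)) hu]
  congr 1
  have : (fun w : ℂ => (starRingEnd ℂ) w) = ⇑Complex.conjCLE := by
    ext w; simp
  rw [this, Complex.conjCLE.fderiv]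

lemma wderiv_conj_comp {u : ℂ → ℂ} {z : ℂ} (hu : DifferentiableAt ℝ u z) :
    wderiv (fun w => (starRingEnd ℂ) (u w)) z = (starRingEnd ℂ) (wderivBar u z) := by
  simp only [wderiv, wderivBar, fderiv_conj_comp hu, ContinuousLinearMap.comp_apply]
  have e1 : (Complex.conjCLE.toContinuousLinearMap) (fderiv ℝ u z 1)
      = (starRingEnd ℂ) (fderiv ℝ u z 1) := by simp
  have e2 : (Complex.conjCLE.toContinuousLinearMap) (fderiv ℝ u z I)
      = (starRingEnd ℂ) (fderiv ℝ u z I) := by simp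
  rw [e1, e2, map_mul, map_add, map_mul]
  simp only [Complex.conj_I, map_ofNat, map_one, map_div₀]
  ring

lemma wderivBar_conj_comp {u : ℂ → ℂ} {z : ℂ} (hu : DifferentiableAt ℝ u z) :
    wderivBar (fun w => (starRingEnd ℂ) (u w)) z = (starRingEnd ℂ) (wderiv u z) := by
  simp only [wderiv, wderivBar, fderiv_conj_comp hu, ContinuousLinearMap.comp_apply]
  have e1 : (Complex.conjCLE.toContinuousLinearMap) (fderiv ℝ u z 1)
      = (starRingEnd ℂ) (fderiv ℝ u z 1) := by simp
  have e2 : (Complex.conjCLE.toContinuousLinearMap) (fderiv ℝ u z I)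
      = (starRingEnd ℂ) (fderiv ℝ u z I) := by simp
  rw [e1, e2, map_mul, map_sub, map_mul]
  simp only [Complex.conj_I, map_ofNat, map_one, map_div₀]
  ring

lemma wderiv_cexp {u : ℂ → ℂ} {z : ℂ} (hu : DifferentiableAt ℝ u z) :
    wderiv (fun w => Complex.exp (u w)) z = Complex.exp (u z) * wderiv u z := by
  rw [wderiv, wderiv, (hu.hasFDerivAt.cexp).fderiv]
  simp only [ContinuousLinearMap.smul_apply, smul_eq_mul]
  ring

lemma wderivBar_cexp {u : ℂ → ℂ} {z : ℂ} (hu : DifferentiableAt ℝ u z) :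
    wderivBar (fun w => Complex.exp (u w)) z = Complex.exp (u z) * wderivBar u z := by
  rw [wderivBar, wderivBar, (hu.hasFDerivAt.cexp).fderiv]
  simp only [ContinuousLinearMap.smul_apply, smul_eq_mul]
  ring

lemma hasFDerivAt_affine (a b z : ℂ) :
    HasFDerivAt (fun w : ℂ => a * w + b) ((ContinuousLinearMap.mul ℝ ℂ) a) z := by
  have h := ((ContinuousLinearMap.mul ℝ ℂ) a).hasFDerivAt (x := z)
  exact h.add_const b

lemma wderiv_comp_affine {f : ℂ → ℂ} {a b z : ℂ}
    (hf : DifferentiableAt ℝ f (a * z + b)) :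
    wderiv (fun w => f (a * w + b)) z = a * wderiv f (a * z + b) := by
  have hcomp : fderiv ℝ (fun w => f (a * w + b)) z
      = (fderiv ℝ f (a * z + b)).comp ((ContinuousLinearMap.mul ℝ ℂ) a) := by
    have h : (fun w => f (a * w + b)) = f ∘ (fun w : ℂ => a * w + b) := rfl
    rw [h, fderiv_comp z hf (hasFDerivAt_affine a b z).differentiableAt,
      (hasFDerivAt_affine a b z).fderiv]
  rw [wderiv, wderiv, hcomp]
  simp only [ContinuousLinearMap.comp_apply, ContinuousLinearMap.mul_apply', mul_one]
  set L := fderiv ℝ f (a * z + b) with hL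
  rw [clm_apply_eq L a, clm_apply_eq L (a * I)]
  simp only [Complex.mul_re, Complex.mul_im, Complex.I_re, Complex.I_im]
  push_cast
  conv_rhs => rw [← Complex.re_add_im a]
  linear_combination ((a.im : ℂ) * L I * (1/2)) * Complex.I_sq

lemma wderivBar_comp_affine {f : ℂ → ℂ} {a b z : ℂ}
    (hf : DifferentiableAt ℝ f (a * z + b)) :
    wderivBar (fun w => f (a * w + b)) z
      = (starRingEnd ℂ) a * wderivBar f (a * z + b) := by
  have hcomp : fderiv ℝ (fun w => f (a * w + b)) z
      = (fderiv ℝ f (a * z + b)).comp ((ContinuousLinearMap.mul ℝ ℂ) a) := by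
    have h : (fun w => f (a * w + b)) = f ∘ (fun w : ℂ => a * w + b) := rfl
    rw [h, fderiv_comp z hf (hasFDerivAt_affine a b z).differentiableAt,
      (hasFDerivAt_affine a b z).fderiv]
  rw [wderivBar, wderivBar, hcomp]
  simp only [ContinuousLinearMap.comp_apply, ContinuousLinearMap.mul_apply', mul_one]
  set L := fderiv ℝ f (a * z + b) with hL
  rw [clm_apply_eq L a, clm_apply_eq L (a * I)]
  simp only [Complex.mul_re, Complex.mul_im, Complex.I_re, Complex.I_im]
  rw [show (starRingEnd ℂ) a = (a.re : ℂ) - (a.im : ℂ) * I by simp [Complex.ext_iff]]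
  push_cast
  linear_combination ((a.im : ℂ) * L I * (1/2)) * Complex.I_sq

lemma contDiff_wderiv {f : ℂ → ℂ} (hf : ContDiff ℝ (⊤ : ℕ∞) f) :
    ContDiff ℝ (⊤ : ℕ∞) (fun z => wderiv f z) := by
  have h1 : ContDiff ℝ (⊤ : ℕ∞) (fderiv ℝ f) := hf.fderiv_right (le_refl _)
  have h2 : ContDiff ℝ (⊤ : ℕ∞) (fun z => fderiv ℝ f z 1) := h1.clm_apply contDiff_const
  have h3 : ContDiff ℝ (⊤ : ℕ∞) (fun z => fderiv ℝ f z I) := h1.clm_apply contDiff_const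
  exact contDiff_const.mul (h2.sub (contDiff_const.mul h3))

lemma contDiff_wderivBar {f : ℂ → ℂ} (hf : ContDiff ℝ (⊤ : ℕ∞) f) :
    ContDiff ℝ (⊤ : ℕ∞) (fun z => wderivBar f z) := by
  have h1 : ContDiff ℝ (⊤ : ℕ∞) (fderiv ℝ f) := hf.fderiv_right (le_refl _)
  have h2 : ContDiff ℝ (⊤ : ℕ∞) (fun z => fderiv ℝ f z 1) := h1.clm_apply contDiff_const
  have h3 : ContDiff ℝ (⊤ : ℕ∞) (fun z => fderiv ℝ f z I) := h1.clm_apply contDiff_const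
  exact contDiff_const.mul (h2.add (contDiff_const.mul h3))

lemma contDiff_conj' : ContDiff ℝ (⊤ : ℕ∞) (fun w : ℂ => (starRingEnd ℂ) w) := by
  have := Complex.conjCLE.toContinuousLinearMap.contDiff (n := ((⊤ : ℕ∞) : WithTop ℕ∞))
  exact this

lemma ContDiff.cdifferentiable {f : ℂ → ℂ} (hf : ContDiff ℝ (⊤ : ℕ∞) f) :
    Differentiable ℝ f := hf.differentiable (by simp)

end Wirt
section Main

open Complex

/-- The exponent of `J`. -/
def Efun (ν μ : ℝ) (ρ : GT → GT) (τ : ℂ → ℂ) (g : GT) (z : ℂ) : ℂ :=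
  (ν : ℂ) * (z * (starRingEnd ℂ) (GT.act g⁻¹ 0) - (starRingEnd ℂ) z * GT.act g⁻¹ 0)
  + (μ : ℂ) * (τ z * (starRingEnd ℂ) (GT.act (ρ g)⁻¹ 0)
      - (starRingEnd ℂ) (τ z) * GT.act (ρ g)⁻¹ 0)

lemma jfac_eq (α : ℝ) (g : GT) (z : ℂ) :
    jfac α g z = Complex.exp ((α : ℂ) * (z * (starRingEnd ℂ) (GT.act g⁻¹ 0)
      - (starRingEnd ℂ) z * GT.act g⁻¹ 0)) := by
  unfold jfac
  congr 1
  have h2 : z * (starRingEnd ℂ) (GT.act g⁻¹ 0) - (starRingEnd ℂ) z * GT.act g⁻¹ 0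
      = herm z (GT.act g⁻¹ 0) - (starRingEnd ℂ) (herm z (GT.act g⁻¹ 0)) := by
    simp [herm, map_mul]
  rw [h2, Complex.sub_conj]
  push_cast
  ring

lemma Jfun_eq (ν μ : ℝ) (ρ : GT → GT) (τ : ℂ → ℂ) (g : GT) (z : ℂ) :
    Jfun ν μ ρ τ g z = Complex.exp (Efun ν μ ρ τ g z) := by
  rw [Jfun, jfac_eq, jfac_eq, ← Complex.exp_add]
  rfl

lemma wderiv_affcomb {u : ℂ → ℂ} {z : ℂ} (k1 k2 k3 k4 : ℂ) (hu : Differentiable ℝ u) :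
    wderiv (fun w => k1 * w + (k2 * (starRingEnd ℂ) w
      + (k3 * u w + k4 * (starRingEnd ℂ) (u w)))) z
      = k1 + (k3 * wderiv u z + k4 * (starRingEnd ℂ) (wderivBar u z)) := by
  have hcj : DifferentiableAt ℝ (fun w : ℂ => (starRingEnd ℂ) w) z := _root_.differentiable_conj z
  have hcu : DifferentiableAt ℝ (fun w => (starRingEnd ℂ) (u w)) z :=
    (_root_.differentiable_conj (u z)).comp z (hu z)
  have d1 : DifferentiableAt ℝ (fun w : ℂ => k1 * w) z := differentiableAt_fun_id.const_mul _
  have d2 : DifferentiableAt ℝ (fun w : ℂ => k2 * (starRingEnd ℂ) w) z := hcj.const_mul _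
  have d3 : DifferentiableAt ℝ (fun w => k3 * u w) z := (hu z).const_mul _
  have d4 : DifferentiableAt ℝ (fun w => k4 * (starRingEnd ℂ) (u w)) z := hcu.const_mul _
  rw [wderiv_add d1 (d2.fun_add (d3.fun_add d4)), wderiv_add d2 (d3.fun_add d4), wderiv_add d3 d4,
    wderiv_const_mul k1 differentiableAt_fun_id, wderiv_id,
    wderiv_const_mul k2 hcj, wderiv_conj_comp differentiableAt_fun_id, wderivBar_id,
    wderiv_const_mul k3 (hu z), wderiv_const_mul k4 hcu, wderiv_conj_comp (hu z)]
  simp only [map_zero]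
  ring

lemma wderivBar_affcomb {u : ℂ → ℂ} {z : ℂ} (k1 k2 k3 k4 : ℂ) (hu : Differentiable ℝ u) :
    wderivBar (fun w => k1 * w + (k2 * (starRingEnd ℂ) w
      + (k3 * u w + k4 * (starRingEnd ℂ) (u w)))) z
      = k2 + (k3 * wderivBar u z + k4 * (starRingEnd ℂ) (wderiv u z)) := by
  have hcj : DifferentiableAt ℝ (fun w : ℂ => (starRingEnd ℂ) w) z := _root_.differentiable_conj z
  have hcu : DifferentiableAt ℝ (fun w => (starRingEnd ℂ) (u w)) z :=
    (_root_.differentiable_conj (u z)).comp z (hu z)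
  have d1 : DifferentiableAt ℝ (fun w : ℂ => k1 * w) z := differentiableAt_fun_id.const_mul _
  have d2 : DifferentiableAt ℝ (fun w : ℂ => k2 * (starRingEnd ℂ) w) z := hcj.const_mul _
  have d3 : DifferentiableAt ℝ (fun w => k3 * u w) z := (hu z).const_mul _
  have d4 : DifferentiableAt ℝ (fun w => k4 * (starRingEnd ℂ) (u w)) z := hcu.const_mul _
  rw [wderivBar_add d1 (d2.fun_add (d3.fun_add d4)), wderivBar_add d2 (d3.fun_add d4), wderivBar_add d3 d4,
    wderivBar_const_mul k1 differentiableAt_fun_id, wderivBar_id,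
    wderivBar_const_mul k2 hcj, wderivBar_conj_comp differentiableAt_fun_id, wderiv_id,
    wderivBar_const_mul k3 (hu z), wderivBar_const_mul k4 hcu, wderivBar_conj_comp (hu z)]
  simp only [map_one]
  ring

lemma wderiv_Efun (ν μ : ℝ) (ρ : GT → GT) {τ : ℂ → ℂ} (hτ : Differentiable ℝ τ)
    (g : GT) (z : ℂ) :
    wderiv (Efun ν μ ρ τ g) z
      = (ν : ℂ) * (starRingEnd ℂ) (GT.act g⁻¹ 0)
        + ((μ : ℂ) * (starRingEnd ℂ) (GT.act (ρ g)⁻¹ 0) * wderiv τ z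
          - (μ : ℂ) * GT.act (ρ g)⁻¹ 0 * (starRingEnd ℂ) (wderivBar τ z)) := by
  have hfun : Efun ν μ ρ τ g = fun w =>
      ((ν : ℂ) * (starRingEnd ℂ) (GT.act g⁻¹ 0)) * w
      + ((-(ν : ℂ) * GT.act g⁻¹ 0) * (starRingEnd ℂ) w
        + (((μ : ℂ) * (starRingEnd ℂ) (GT.act (ρ g)⁻¹ 0)) * τ w
          + ((-(μ : ℂ)) * GT.act (ρ g)⁻¹ 0) * (starRingEnd ℂ) (τ w))) := by
    funext w; simp only [Efun]; ring
  rw [hfun, wderiv_affcomb _ _ _ _ hτ]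
  ring

lemma wderivBar_Efun (ν μ : ℝ) (ρ : GT → GT) {τ : ℂ → ℂ} (hτ : Differentiable ℝ τ)
    (g : GT) (z : ℂ) :
    wderivBar (Efun ν μ ρ τ g) z
      = -(ν : ℂ) * GT.act g⁻¹ 0
        + ((μ : ℂ) * (starRingEnd ℂ) (GT.act (ρ g)⁻¹ 0) * wderivBar τ z
          - (μ : ℂ) * GT.act (ρ g)⁻¹ 0 * (starRingEnd ℂ) (wderiv τ z)) := by
  have hfun : Efun ν μ ρ τ g = fun w =>
      ((ν : ℂ) * (starRingEnd ℂ) (GT.act g⁻¹ 0)) * w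
      + ((-(ν : ℂ) * GT.act g⁻¹ 0) * (starRingEnd ℂ) w
        + (((μ : ℂ) * (starRingEnd ℂ) (GT.act (ρ g)⁻¹ 0)) * τ w
          + ((-(μ : ℂ)) * GT.act (ρ g)⁻¹ 0) * (starRingEnd ℂ) (τ w))) := by
    funext w; simp only [Efun]; ring
  rw [hfun, wderivBar_affcomb _ _ _ _ hτ]
  ring

lemma contDiff_Efun (ν μ : ℝ) (ρ : GT → GT) {τ : ℂ → ℂ} (hτ : ContDiff ℝ (⊤ : ℕ∞) τ)
    (g : GT) : ContDiff ℝ (⊤ : ℕ∞) (Efun ν μ ρ τ g) := by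
  unfold Efun
  exact (contDiff_const.mul ((contDiff_id.mul contDiff_const).sub
      (contDiff_conj'.mul contDiff_const))).add
    (contDiff_const.mul ((hτ.mul contDiff_const).sub
      ((contDiff_conj'.comp hτ).mul contDiff_const)))

lemma contDiff_Jfun (ν μ : ℝ) (ρ : GT → GT) {τ : ℂ → ℂ} (hτ : ContDiff ℝ (⊤ : ℕ∞) τ)
    (g : GT) : ContDiff ℝ (⊤ : ℕ∞) (fun w => Jfun ν μ ρ τ g w) := by
  have : (fun w => Jfun ν μ ρ τ g w) = fun w => Complex.exp (Efun ν μ ρ τ g w) :=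
    funext fun w => Jfun_eq ν μ ρ τ g w
  rw [this]
  exact Complex.contDiff_exp.comp (contDiff_Efun ν μ ρ hτ g)

lemma circle_conj_mul (a : Circle) : (starRingEnd ℂ) (a : ℂ) * (a : ℂ) = 1 := by
  rw [mul_comm, Complex.mul_conj, Circle.normSq_coe]
  norm_num

lemma act_inv_zero (g : GT) : GT.act g⁻¹ 0 = -((starRingEnd ℂ) (g.a : ℂ) * g.b) := by
  have h1 : GT.act g⁻¹ 0 = (g⁻¹).b := by simp [GT.act]
  have h2 : (g⁻¹).b = -(((g.a⁻¹ : Circle) : ℂ) * g.b) := rfl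
  rw [h1, h2, Circle.coe_inv_eq_conj]

lemma wderiv_comp_act {f : ℂ → ℂ} {g : GT} {z : ℂ}
    (hf : DifferentiableAt ℝ f (GT.act g z)) :
    wderiv (fun w => f (GT.act g w)) z = (g.a : ℂ) * wderiv f (GT.act g z) :=
  wderiv_comp_affine hf

lemma wderivBar_comp_act {f : ℂ → ℂ} {g : GT} {z : ℂ}
    (hf : DifferentiableAt ℝ f (GT.act g z)) :
    wderivBar (fun w => f (GT.act g w)) z
      = (starRingEnd ℂ) (g.a : ℂ) * wderivBar f (GT.act g z) :=
  wderivBar_comp_affine hf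

section Equiv

variable {ν μ : ℝ} {ρ : GT → GT} {τ : ℂ → ℂ}

lemma wderiv_tau_act (hτ : Differentiable ℝ τ)
    (hequiv : ∀ (g : GT) (z : ℂ), τ (GT.act g z) = GT.act (ρ g) (τ z)) (g : GT) (z : ℂ) :
    wderiv τ (GT.act g z) = (starRingEnd ℂ) (g.a : ℂ) * (((ρ g).a : ℂ) * wderiv τ z) := by
  have h1 : wderiv (fun w => τ (GT.act g w)) z = (g.a : ℂ) * wderiv τ (GT.act g z) :=
    wderiv_comp_act (hτ _)
  have h2 : (fun w => τ (GT.act g w)) = fun w => ((ρ g).a : ℂ) * τ w + (ρ g).b :=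
    funext fun w => hequiv g w
  rw [h2] at h1
  rw [wderiv_add ((hτ z).const_mul _) (differentiableAt_const _),
    wderiv_const_mul _ (hτ z), wderiv_const, add_zero] at h1
  have ha := circle_conj_mul g.a
  calc wderiv τ (GT.act g z)
      = (starRingEnd ℂ) (g.a : ℂ) * ((g.a : ℂ) * wderiv τ (GT.act g z)) := by
        rw [← mul_assoc, ha, one_mul]
    _ = (starRingEnd ℂ) (g.a : ℂ) * (((ρ g).a : ℂ) * wderiv τ z) := by rw [← h1]

lemma wderivBar_tau_act (hτ : Differentiable ℝ τ)
    (hequiv : ∀ (g : GT) (z : ℂ), τ (GT.act g z) = GT.act (ρ g) (τ z)) (g : GT) (z : ℂ) :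
    wderivBar τ (GT.act g z) = (g.a : ℂ) * (((ρ g).a : ℂ) * wderivBar τ z) := by
  have h1 : wderivBar (fun w => τ (GT.act g w)) z
      = (starRingEnd ℂ) (g.a : ℂ) * wderivBar τ (GT.act g z) :=
    wderivBar_comp_act (hτ _)
  have h2 : (fun w => τ (GT.act g w)) = fun w => ((ρ g).a : ℂ) * τ w + (ρ g).b :=
    funext fun w => hequiv g w
  rw [h2] at h1
  rw [wderivBar_add ((hτ z).const_mul _) (differentiableAt_const _),
    wderivBar_const_mul _ (hτ z), wderivBar_const, add_zero] at h1
  have ha := circle_conj_mul g.a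
  calc wderivBar τ (GT.act g z)
      = (g.a : ℂ) * ((starRingEnd ℂ) (g.a : ℂ) * wderivBar τ (GT.act g z)) := by
        rw [← mul_assoc, mul_comm ((g.a : ℂ)), ha, one_mul]
    _ = (g.a : ℂ) * (((ρ g).a : ℂ) * wderivBar τ z) := by rw [← h1]

lemma Sfun_eq (hτ : Differentiable ℝ τ) (z : ℂ) :
    Sfun ν μ τ z = (ν : ℂ) * z + (μ : ℂ) * (τ z * (starRingEnd ℂ) (wderiv τ z)
      - (starRingEnd ℂ) (τ z) * wderivBar τ z) := by
  unfold Sfun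
  rw [wderivBar_conj_comp (hτ z)]

lemma S_equiv (hτ : Differentiable ℝ τ)
    (hequiv : ∀ (g : GT) (z : ℂ), τ (GT.act g z) = GT.act (ρ g) (τ z)) (g : GT) (z : ℂ) :
    (starRingEnd ℂ) (g.a : ℂ) * Sfun ν μ τ (GT.act g z)
      = Sfun ν μ τ z
        + (-(ν : ℂ) * GT.act g⁻¹ 0
          + ((μ : ℂ) * (starRingEnd ℂ) (GT.act (ρ g)⁻¹ 0) * wderivBar τ z
            - (μ : ℂ) * GT.act (ρ g)⁻¹ 0 * (starRingEnd ℂ) (wderiv τ z))) := by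
  rw [Sfun_eq hτ, Sfun_eq hτ, wderiv_tau_act hτ hequiv g z, wderivBar_tau_act hτ hequiv g z,
    hequiv g z, act_inv_zero g, act_inv_zero (ρ g)]
  rw [show GT.act g z = (g.a : ℂ) * z + g.b from rfl,
    show GT.act (ρ g) (τ z) = ((ρ g).a : ℂ) * τ z + (ρ g).b from rfl]
  simp only [map_mul, map_add, map_neg, Complex.conj_conj]
  have ha := circle_conj_mul g.a
  have hx := circle_conj_mul (ρ g).a
  linear_combination ((ν : ℂ) * z + (μ:ℂ) * τ z * (starRingEnd ℂ) (wderiv τ z)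
      - (μ:ℂ) * ((ρ g).a : ℂ) * (starRingEnd ℂ) ((ρ g).b) * wderivBar τ z
      - (μ:ℂ) * (starRingEnd ℂ) (τ z) * wderivBar τ z
      + (μ:ℂ) * (ρ g).b * (starRingEnd ℂ) (((ρ g).a : ℂ)) * (starRingEnd ℂ) (wderiv τ z)) * ha
    + ((μ : ℂ) * (starRingEnd ℂ) (g.a:ℂ) * (g.a:ℂ) * (τ z * (starRingEnd ℂ) (wderiv τ z)
      - (starRingEnd ℂ) (τ z) * wderivBar τ z)) * hx

lemma S_equiv' (hτ : Differentiable ℝ τ)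
    (hequiv : ∀ (g : GT) (z : ℂ), τ (GT.act g z) = GT.act (ρ g) (τ z)) (g : GT) (z : ℂ) :
    (g.a : ℂ) * (starRingEnd ℂ) (Sfun ν μ τ (GT.act g z))
      = (starRingEnd ℂ) (Sfun ν μ τ z)
        + (-(ν : ℂ) * (starRingEnd ℂ) (GT.act g⁻¹ 0)
          + ((μ : ℂ) * GT.act (ρ g)⁻¹ 0 * (starRingEnd ℂ) (wderivBar τ z)
            - (μ : ℂ) * (starRingEnd ℂ) (GT.act (ρ g)⁻¹ 0) * wderiv τ z)) := by
  have h := congrArg (starRingEnd ℂ) (S_equiv (ν := ν) (μ := μ) hτ hequiv g z)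
  simp only [map_mul, map_add, map_sub, map_neg, Complex.conj_conj, Complex.conj_ofReal] at h
  linear_combination h

lemma contDiff_Sfun (hτ : ContDiff ℝ (⊤ : ℕ∞) τ) : ContDiff ℝ (⊤ : ℕ∞) (Sfun ν μ τ) := by
  have hτb : ContDiff ℝ (⊤ : ℕ∞) (fun w => (starRingEnd ℂ) (τ w)) := contDiff_conj'.comp hτ
  unfold Sfun
  exact (contDiff_const.mul contDiff_id).add (contDiff_const.mul
    ((hτ.mul (contDiff_wderivBar hτb)).sub ((contDiff_conj'.comp hτ).mul (contDiff_wderivBar hτ))))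

lemma B_act (hτ : Differentiable ℝ τ)
    (hequiv : ∀ (g : GT) (z : ℂ), τ (GT.act g z) = GT.act (ρ g) (τ z)) (g : GT) (z : ℂ) :
    Bfun ν μ τ (GT.act g z) = Bfun ν μ τ z := by
  unfold Bfun
  rw [wderiv_tau_act hτ hequiv g z, wderivBar_tau_act hτ hequiv g z]
  simp [map_mul, Circle.norm_coe]

lemma wderiv_Sfun (hτ : ContDiff ℝ (⊤ : ℕ∞) τ) (z : ℂ) :
    wderiv (Sfun ν μ τ) z = ((Bfun ν μ τ z : ℝ) : ℂ)
      + ((μ : ℂ) / 4) * (τ z * lap (fun w => (starRingEnd ℂ) (τ w)) z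
        - (starRingEnd ℂ) (τ z) * lap τ z) := by
  have hτd := hτ.cdifferentiable
  have hτb : ContDiff ℝ (⊤ : ℕ∞) (fun w => (starRingEnd ℂ) (τ w)) := contDiff_conj'.comp hτ
  have hq := contDiff_wderivBar hτ
  have hqb := contDiff_wderivBar hτb
  have hA : DifferentiableAt ℝ (fun w => τ w * wderivBar (fun x => (starRingEnd ℂ) (τ x)) w) z :=
    (hτd z).mul (hqb.cdifferentiable z)
  have hB : DifferentiableAt ℝ (fun w => (starRingEnd ℂ) (τ w) * wderivBar τ w) z :=
    (hτb.cdifferentiable z).mul (hq.cdifferentiable z)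
  unfold Sfun
  rw [wderiv_add (differentiableAt_fun_id.const_mul _) ((hA.fun_sub hB).const_mul _),
    wderiv_const_mul _ differentiableAt_fun_id, wderiv_id,
    wderiv_const_mul _ (hA.fun_sub hB), wderiv_sub hA hB,
    wderiv_mul (hτd z) (hqb.cdifferentiable z),
    wderiv_mul (hτb.cdifferentiable z) (hq.cdifferentiable z),
    wderiv_conj_comp (hτd z), wderivBar_conj_comp (hτd z)]
  unfold lap Bfun
  push_cast
  have habs1 : ((‖wderiv τ z‖ : ℂ)) ^ 2
      = wderiv τ z * (starRingEnd ℂ) (wderiv τ z) := by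
    rw [← Complex.ofReal_pow, Complex.sq_norm, ← Complex.mul_conj]
  have habs2 : ((‖wderivBar τ z‖ : ℂ)) ^ 2
      = wderivBar τ z * (starRingEnd ℂ) (wderivBar τ z) := by
    rw [← Complex.ofReal_pow, Complex.sq_norm, ← Complex.mul_conj]
  rw [habs1, habs2]
  ring

lemma Lop_eq (hτ : ContDiff ℝ (⊤ : ℕ∞) τ) {f : ℂ → ℂ} (hf : ContDiff ℝ (⊤ : ℕ∞) f) (z : ℂ) :
    Lop ν μ τ f z
      = Atop ν μ τ (fun w => Aop ν μ τ f w) z + ((Bfun ν μ τ z : ℝ) : ℂ) * f z := by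
  have hfd := hf.cdifferentiable
  have hS := contDiff_Sfun (ν := ν) (μ := μ) hτ
  have hbf := contDiff_wderivBar hf
  unfold Lop Atop Aop
  rw [wderiv_add (hbf.cdifferentiable z) (((hS.cdifferentiable z).fun_mul (hfd z))),
    wderiv_mul (hS.cdifferentiable z) (hfd z), wderiv_Sfun hτ z]
  have habs : ((‖Sfun ν μ τ z‖ : ℂ)) ^ 2
      = Sfun ν μ τ z * (starRingEnd ℂ) (Sfun ν μ τ z) := by
    rw [← Complex.ofReal_pow, Complex.sq_norm, ← Complex.mul_conj]
  rw [habs]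
  ring

lemma Aop_translate (hτ : ContDiff ℝ (⊤ : ℕ∞) τ)
    (hequiv : ∀ (g : GT) (z : ℂ), τ (GT.act g z) = GT.act (ρ g) (τ z))
    {f : ℂ → ℂ} (hf : ContDiff ℝ (⊤ : ℕ∞) f) (g : GT) (w : ℂ) :
    Aop ν μ τ (fun x => Jfun ν μ ρ τ g x * f (GT.act g x)) w
      = (starRingEnd ℂ) (g.a : ℂ) * (Jfun ν μ ρ τ g w * Aop ν μ τ f (GT.act g w)) := by
  have hτd := hτ.cdifferentiable
  have hfd := hf.cdifferentiable
  have hE : Differentiable ℝ (Efun ν μ ρ τ g) := (contDiff_Efun ν μ ρ hτ g).cdifferentiable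
  have hJeq : (fun x => Jfun ν μ ρ τ g x) = fun x => Complex.exp (Efun ν μ ρ τ g x) :=
    funext fun x => Jfun_eq ν μ ρ τ g x
  have hJd : DifferentiableAt ℝ (fun x => Jfun ν μ ρ τ g x) w := by
    rw [hJeq]; exact (hE w).cexp
  have hact : DifferentiableAt ℝ (fun x => f (GT.act g x)) w :=
    (hfd (GT.act g w)).comp w ((differentiableAt_fun_id.const_mul ((g.a : ℂ))).add_const g.b)
  have hJbar : wderivBar (fun x => Jfun ν μ ρ τ g x) w
      = Jfun ν μ ρ τ g w * wderivBar (Efun ν μ ρ τ g) w := by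
    rw [hJeq, wderivBar_cexp (hE w), ← Jfun_eq]
  unfold Aop
  rw [wderivBar_mul hJd hact, hJbar, wderivBar_comp_act (hfd _), wderivBar_Efun ν μ ρ hτd g w]
  linear_combination (-(Jfun ν μ ρ τ g w * f (GT.act g w))) * (S_equiv hτd hequiv g w)

lemma Atop_translate (hτ : ContDiff ℝ (⊤ : ℕ∞) τ)
    (hequiv : ∀ (g : GT) (z : ℂ), τ (GT.act g z) = GT.act (ρ g) (τ z))
    {f : ℂ → ℂ} (hf : ContDiff ℝ (⊤ : ℕ∞) f) (g : GT) (w : ℂ) :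
    Atop ν μ τ (fun x => Jfun ν μ ρ τ g x * Aop ν μ τ f (GT.act g x)) w
      = (g.a : ℂ) * (Jfun ν μ ρ τ g w * Atop ν μ τ (fun y => Aop ν μ τ f y) (GT.act g w)) := by
  have hτd := hτ.cdifferentiable
  have hAopf : ContDiff ℝ (⊤ : ℕ∞) (fun y => Aop ν μ τ f y) := by
    unfold Aop
    exact (contDiff_wderivBar hf).add ((contDiff_Sfun hτ).mul hf)
  have hhd := hAopf.cdifferentiable
  have hE : Differentiable ℝ (Efun ν μ ρ τ g) := (contDiff_Efun ν μ ρ hτ g).cdifferentiable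
  have hJeq : (fun x => Jfun ν μ ρ τ g x) = fun x => Complex.exp (Efun ν μ ρ τ g x) :=
    funext fun x => Jfun_eq ν μ ρ τ g x
  have hJd : DifferentiableAt ℝ (fun x => Jfun ν μ ρ τ g x) w := by
    rw [hJeq]; exact (hE w).cexp
  have hact : DifferentiableAt ℝ (fun x => Aop ν μ τ f (GT.act g x)) w :=
    (hhd (GT.act g w)).comp w ((differentiableAt_fun_id.const_mul ((g.a : ℂ))).add_const g.b)
  have hJw : wderiv (fun x => Jfun ν μ ρ τ g x) w
      = Jfun ν μ ρ τ g w * wderiv (Efun ν μ ρ τ g) w := by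
    rw [hJeq, wderiv_cexp (hE w), ← Jfun_eq]
  unfold Atop
  rw [wderiv_mul hJd hact, hJw,
    show wderiv (fun x => Aop ν μ τ f (GT.act g x)) w
      = (g.a : ℂ) * wderiv (fun y => Aop ν μ τ f y) (GT.act g w) from wderiv_comp_act (hhd _),
    wderiv_Efun ν μ ρ hτd g w]
  linear_combination (-(Jfun ν μ ρ τ g w * Aop ν μ τ f (GT.act g w))) * (S_equiv' hτd hequiv g w)

lemma Atop_const_mul (c : ℂ) {h : ℂ → ℂ} {z : ℂ} (hh : DifferentiableAt ℝ h z) :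
    Atop ν μ τ (fun w => c * h w) z = c * Atop ν μ τ h z := by
  unfold Atop
  rw [wderiv_const_mul c hh]
  ring

end Equiv

end Main
theorem statement3 (ν μ : ℝ) (hν : 0 < ν) (hμ : 0 < μ)
    (ρ : GT →* GT) (τ : ℂ → ℂ) (hτ : ContDiff ℝ (⊤ : ℕ∞) τ)
    (hequiv : ∀ (g : GT) (z : ℂ), τ (GT.act g z) = GT.act (ρ g) (τ z))
    (g : GT) (f : ℂ → ℂ) (hf : ContDiff ℝ (⊤ : ℕ∞) f) (z : ℂ) :
    Lop ν μ τ (fun w => Jfun ν μ (⇑ρ) τ g w * f (GT.act g w)) z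
      = Jfun ν μ (⇑ρ) τ g z * Lop ν μ τ f (GT.act g z) := by
  have hτd := hτ.cdifferentiable
  have hJ := contDiff_Jfun ν μ (⇑ρ) hτ g
  have haff : ContDiff ℝ (⊤ : ℕ∞) (fun w : ℂ => (g.a : ℂ) * w + g.b) :=
    (contDiff_const.mul contDiff_id).add contDiff_const
  have hfg : ContDiff ℝ (⊤ : ℕ∞) (fun w => f (GT.act g w)) := hf.comp haff
  have hTg : ContDiff ℝ (⊤ : ℕ∞) (fun w => Jfun ν μ (⇑ρ) τ g w * f (GT.act g w)) := hJ.mul hfg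
  have hAopf : ContDiff ℝ (⊤ : ℕ∞) (fun w => Aop ν μ τ f w) := by
    unfold Aop
    exact (contDiff_wderivBar hf).add ((contDiff_Sfun hτ).mul hf)
  have hAg : ContDiff ℝ (⊤ : ℕ∞) (fun w => Aop ν μ τ f (GT.act g w)) := hAopf.comp haff
  have hA : (fun w => Aop ν μ τ (fun x => Jfun ν μ (⇑ρ) τ g x * f (GT.act g x)) w)
      = fun w => (starRingEnd ℂ) (g.a : ℂ)
          * (Jfun ν μ (⇑ρ) τ g w * Aop ν μ τ f (GT.act g w)) :=
    funext fun w => Aop_translate hτ hequiv hf g w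
  rw [Lop_eq hτ hTg z, Lop_eq hτ hf (GT.act g z), hA,
    Atop_const_mul _ ((hJ.cdifferentiable z).fun_mul (hAg.cdifferentiable z)),
    Atop_translate hτ hequiv hf g z, B_act hτd hequiv g z]
  linear_combination (Jfun ν μ (⇑ρ) τ g z
    * Atop ν μ τ (fun y => Aop ν μ τ f y) (GT.act g z)) * (circle_conj_mul g.a)
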